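/- Let γ > 0 and let K be an m×n real matrix such that γ(A − BK) is Schur stable. Let P̃ be a symmetric positive definite matrix satisfying γ²(A − BK)ᵀP̃(A − BK) − P̃ + Q + KᵀRK = 0, set K₊ = (BᵀP̃B + (1/γ²)R)⁻¹BᵀP̃A, and let P̄ be a real symmetric matrix satisfying γ²(A − BK₊)ᵀP̄(A − BK₊) − P̄ + Q + K₊ᵀRK₊ = 0. Then P̄ is positive definite and P̄ ≤ P̃. -/

import Mathlib

open Matrix

/-- A real square matrix is Schur stable if every eigenvalue of it, viewed as a
complex matrix, has modulus strictly less than `1`. -/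
def SchurStable {n : ℕ} (M : Matrix (Fin n) (Fin n) ℝ) : Prop :=
  ∀ μ ∈ spectrum ℂ (M.map (algebraMap ℝ ℂ)), ‖μ‖ < 1

open Filter Topology
open scoped ENNReal NNReal

namespace SchurAux

attribute [local instance] Matrix.linftyOpNormedAddCommGroup Matrix.linftyOpNormedRing
  Matrix.linftyOpNormedAlgebra

noncomputable def mC {p q : ℕ} (M : Matrix (Fin p) (Fin q) ℝ) : Matrix (Fin p) (Fin q) ℂ :=
  M.map (algebraMap ℝ ℂ)

lemma mC_mul {p q r : ℕ} (M : Matrix (Fin p) (Fin q) ℝ) (N : Matrix (Fin q) (Fin r) ℝ) :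
    mC (M * N) = mC M * mC N :=
  Matrix.map_mul (f := algebraMap ℝ ℂ)

lemma mC_pow {p : ℕ} (M : Matrix (Fin p) (Fin p) ℝ) (k : ℕ) : mC (M ^ k) = (mC M) ^ k := by
  induction k with
  | zero => simp [mC]
  | succ k ih => rw [pow_succ, pow_succ, ← ih, mC_mul]

lemma specRadius_lt_one {p : ℕ} {M : Matrix (Fin p) (Fin p) ℝ} (h : SchurStable M) :
    spectralRadius ℂ (mC M) < 1 := by
  rcases Set.eq_empty_or_nonempty (spectrum ℂ (mC M)) with he | hne
  · simp [spectralRadius, he]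
  · haveI : CompleteSpace (Matrix (Fin p) (Fin p) ℂ) := FiniteDimensional.complete ℂ _
    obtain ⟨z, hz, hz2⟩ := spectrum.exists_nnnorm_eq_spectralRadius_of_nonempty hne
    rw [spectralRadius] at hz2 ⊢
    rw [← hz2]
    have := h z hz
    exact_mod_cast (by exact_mod_cast this : (‖z‖₊ : ℝ≥0∞) < 1)

lemma norm_pow_tendsto {p : ℕ} {M : Matrix (Fin p) (Fin p) ℝ} (h : SchurStable M) :
    Tendsto (fun N : ℕ => ‖(mC M) ^ N‖) atTop (𝓝 0) := by
  haveI : CompleteSpace (Matrix (Fin p) (Fin p) ℂ) := FiniteDimensional.complete ℂ _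
  have hρ := specRadius_lt_one h
  obtain ⟨r, hr1, hr2⟩ := ENNReal.lt_iff_exists_nnreal_btwn.mp hρ
  have hg := spectrum.pow_nnnorm_pow_one_div_tendsto_nhds_spectralRadius (mC M)
  have hev : ∀ᶠ N : ℕ in atTop, (‖(mC M) ^ N‖₊ : ℝ≥0∞) ^ (1 / (N : ℝ)) < (r : ℝ≥0∞) :=
    hg.eventually_lt_const hr1
  have hr2' : (r : ℝ) < 1 := by exact_mod_cast hr2
  have hbound : ∀ᶠ N : ℕ in atTop, ‖(mC M) ^ N‖ ≤ (r : ℝ) ^ N := by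
    filter_upwards [hev, eventually_ge_atTop 1] with N hN hN1
    have hNpos : (0 : ℝ) < N := by exact_mod_cast hN1
    have h2 : ((‖(mC M) ^ N‖₊ : ℝ≥0∞) ^ (1 / (N : ℝ))) ^ (N : ℝ) < (r : ℝ≥0∞) ^ (N : ℝ) :=
      ENNReal.rpow_lt_rpow hN hNpos
    rw [← ENNReal.rpow_mul, one_div_mul_cancel hNpos.ne', ENNReal.rpow_one,
      ENNReal.rpow_natCast, ← ENNReal.coe_pow, ENNReal.coe_lt_coe] at h2
    have h3 : ‖(mC M) ^ N‖ ≤ ((r ^ N : ℝ≥0) : ℝ) := by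
      exact_mod_cast h2.le
    simpa using h3
  refine squeeze_zero' (Eventually.of_forall fun N => norm_nonneg _) hbound ?_
  exact tendsto_pow_atTop_nhds_zero_of_lt_one r.coe_nonneg hr2'


noncomputable def vC {q : ℕ} (x : Fin q → ℝ) : Fin q → ℂ := fun i => (x i : ℂ)

lemma mC_mulVec {p q : ℕ} (M : Matrix (Fin p) (Fin q) ℝ) (x : Fin q → ℝ) :
    mC M *ᵥ vC x = vC (M *ᵥ x) := by
  funext i
  simp [mC, vC, Matrix.mulVec, dotProduct, Matrix.map_apply]

lemma schur_mulVec_tendsto {p : ℕ} {M : Matrix (Fin p) (Fin p) ℝ} (h : SchurStable M)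
    (x : Fin p → ℝ) :
    Tendsto (fun N : ℕ => (M ^ N) *ᵥ x) atTop (𝓝 0) := by
  rw [tendsto_pi_nhds]
  intro i
  have key : ∀ N : ℕ, |((M ^ N) *ᵥ x) i| ≤ ‖(mC M) ^ N‖ * ‖vC x‖ := by
    intro N
    have h1 : ((M ^ N) *ᵥ x) i = ((((mC M) ^ N) *ᵥ vC x) i).re := by
      rw [← mC_pow, mC_mulVec]; simp [vC]
    have h2 : ‖(((mC M) ^ N) *ᵥ vC x) i‖ ≤ ‖((mC M) ^ N) *ᵥ vC x‖ := norm_le_pi_norm _ i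
    have h3 : ‖((mC M) ^ N) *ᵥ vC x‖ ≤ ‖(mC M) ^ N‖ * ‖vC x‖ :=
      Matrix.linfty_opNorm_mulVec _ _
    have h4 : |((M ^ N) *ᵥ x) i| ≤ ‖(((mC M) ^ N) *ᵥ vC x) i‖ := by
      rw [h1]; exact Complex.abs_re_le_norm _
    exact h4.trans (h2.trans h3)
  have hg : Tendsto (fun N : ℕ => ‖(mC M) ^ N‖ * ‖vC x‖) atTop (𝓝 0) := by
    simpa using (norm_pow_tendsto h).mul_const ‖vC x‖
  exact squeeze_zero_norm (fun N => by simpa [Real.norm_eq_abs] using key N) hg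


lemma dot_mul3 {p q : ℕ} (C : Matrix (Fin q) (Fin p) ℝ) (D : Matrix (Fin q) (Fin q) ℝ)
    (y : Fin p → ℝ) :
    y ⬝ᵥ (Cᵀ * D * C) *ᵥ y = (C *ᵥ y) ⬝ᵥ D *ᵥ (C *ᵥ y) := by
  rw [← Matrix.mulVec_mulVec, ← Matrix.mulVec_mulVec, Matrix.dotProduct_mulVec,
    Matrix.vecMul_transpose]

lemma telescope {p : ℕ} (M P S : Matrix (Fin p) (Fin p) ℝ) (h : Mᵀ * P * M - P + S = 0)
    (x : Fin p → ℝ) (N : ℕ) :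
    x ⬝ᵥ P *ᵥ x = ((M ^ N) *ᵥ x) ⬝ᵥ P *ᵥ ((M ^ N) *ᵥ x)
      + ∑ k ∈ Finset.range N, ((M ^ k) *ᵥ x) ⬝ᵥ S *ᵥ ((M ^ k) *ᵥ x) := by
  have hP : P = Mᵀ * P * M + S := by
    have := h
    rw [sub_add, sub_eq_zero] at this
    rw [this]
    abel
  induction N with
  | zero => simp
  | succ N ih =>
    rw [Finset.sum_range_succ, ih]
    have hstep : ((M ^ N) *ᵥ x) ⬝ᵥ P *ᵥ ((M ^ N) *ᵥ x)
        = ((M ^ (N + 1)) *ᵥ x) ⬝ᵥ P *ᵥ ((M ^ (N + 1)) *ᵥ x)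
          + ((M ^ N) *ᵥ x) ⬝ᵥ S *ᵥ ((M ^ N) *ᵥ x) := by
      set y := (M ^ N) *ᵥ x with hy
      have hMy : (M ^ (N + 1)) *ᵥ x = M *ᵥ y := by
        rw [hy, Matrix.mulVec_mulVec, ← pow_succ']
      rw [hMy]
      nth_rewrite 1 [hP]
      rw [Matrix.add_mulVec, dotProduct_add, dot_mul3]
    rw [hstep]
    ring

lemma qform_tendsto {p : ℕ} (P : Matrix (Fin p) (Fin p) ℝ) {v : ℕ → Fin p → ℝ}
    (hv : Tendsto v atTop (𝓝 0)) :
    Tendsto (fun N => v N ⬝ᵥ P *ᵥ v N) atTop (𝓝 0) := by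
  have hc : Continuous fun y : Fin p → ℝ => y ⬝ᵥ P *ᵥ y :=
    continuous_id.dotProduct (continuous_const.matrix_mulVec continuous_id)
  have := (hc.tendsto 0).comp hv
  simpa [Function.comp_def] using this

lemma psd_dot {p : ℕ} {S : Matrix (Fin p) (Fin p) ℝ} (hS : S.PosSemidef) (y : Fin p → ℝ) :
    0 ≤ y ⬝ᵥ S *ᵥ y := by
  have := hS.dotProduct_mulVec_nonneg y
  simpa using this

lemma lyap_nonneg {p : ℕ} {M P S : Matrix (Fin p) (Fin p) ℝ} (hM : SchurStable M)
    (hS : S.PosSemidef) (h : Mᵀ * P * M - P + S = 0) (x : Fin p → ℝ) :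
    0 ≤ x ⬝ᵥ P *ᵥ x := by
  have hge : ∀ N : ℕ, ((M ^ N) *ᵥ x) ⬝ᵥ P *ᵥ ((M ^ N) *ᵥ x) ≤ x ⬝ᵥ P *ᵥ x := by
    intro N
    rw [telescope M P S h x N]
    have : 0 ≤ ∑ k ∈ Finset.range N, ((M ^ k) *ᵥ x) ⬝ᵥ S *ᵥ ((M ^ k) *ᵥ x) :=
      Finset.sum_nonneg fun k _ => psd_dot hS _
    linarith
  have hlim : Tendsto (fun N : ℕ => ((M ^ N) *ᵥ x) ⬝ᵥ P *ᵥ ((M ^ N) *ᵥ x)) atTop (𝓝 0) :=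
    qform_tendsto P (schur_mulVec_tendsto hM x)
  exact le_of_tendsto hlim (Eventually.of_forall hge)

lemma lyap_zero_terms {p : ℕ} {M P S : Matrix (Fin p) (Fin p) ℝ} (hM : SchurStable M)
    (hS : S.PosSemidef) (h : Mᵀ * P * M - P + S = 0) {x : Fin p → ℝ}
    (hx : x ⬝ᵥ P *ᵥ x = 0) (k : ℕ) :
    ((M ^ k) *ᵥ x) ⬝ᵥ S *ᵥ ((M ^ k) *ᵥ x) = 0 := by
  have hP : ∀ y, 0 ≤ y ⬝ᵥ P *ᵥ y := lyap_nonneg hM hS h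
  have hsum : ∀ N : ℕ, ∑ j ∈ Finset.range N, ((M ^ j) *ᵥ x) ⬝ᵥ S *ᵥ ((M ^ j) *ᵥ x) ≤ 0 := by
    intro N
    have := telescope M P S h x N
    rw [hx] at this
    have h0 := hP ((M ^ N) *ᵥ x)
    linarith
  have hterm : ((M ^ k) *ᵥ x) ⬝ᵥ S *ᵥ ((M ^ k) *ᵥ x) ≤ 0 := by
    have := hsum (k + 1)
    have hall : ∀ j ∈ Finset.range (k + 1), 0 ≤ ((M ^ j) *ᵥ x) ⬝ᵥ S *ᵥ ((M ^ j) *ᵥ x) :=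
      fun j _ => psd_dot hS _
    have := Finset.single_le_sum hall (Finset.self_mem_range_succ k)
    linarith [hsum (k + 1)]
  exact le_antisymm hterm (psd_dot hS _)


def vre {q : ℕ} (v : Fin q → ℂ) : Fin q → ℝ := fun i => (v i).re
def vim {q : ℕ} (v : Fin q → ℂ) : Fin q → ℝ := fun i => (v i).im

lemma mC_mulVec_re {p q : ℕ} (S : Matrix (Fin p) (Fin q) ℝ) (v : Fin q → ℂ) :
    vre (mC S *ᵥ v) = S *ᵥ vre v := by
  funext i
  simp [mC, vre, Matrix.mulVec, dotProduct, Complex.re_sum, Matrix.map_apply]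

lemma mC_mulVec_im {p q : ℕ} (S : Matrix (Fin p) (Fin q) ℝ) (v : Fin q → ℂ) :
    vim (mC S *ᵥ v) = S *ᵥ vim v := by
  funext i
  simp [mC, vim, Matrix.mulVec, dotProduct, Complex.im_sum, Matrix.map_apply]

lemma mC_mulVec_eq_zero_iff {p q : ℕ} (S : Matrix (Fin p) (Fin q) ℝ) (v : Fin q → ℂ) :
    mC S *ᵥ v = 0 ↔ S *ᵥ vre v = 0 ∧ S *ᵥ vim v = 0 := by
  constructor
  · intro h
    constructor
    · rw [← mC_mulVec_re, h]; funext i; simp [vre]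
    · rw [← mC_mulVec_im, h]; funext i; simp [vim]
  · rintro ⟨h1, h2⟩
    funext i
    have hre : ((mC S *ᵥ v) i).re = 0 := by
      have := congrFun (mC_mulVec_re S v) i
      rw [h1] at this; simpa [vre] using this
    have him : ((mC S *ᵥ v) i).im = 0 := by
      have := congrFun (mC_mulVec_im S v) i
      rw [h2] at this; simpa [vim] using this
    exact Complex.ext (by simpa using hre) (by simpa using him)

lemma re_dotP {q : ℕ} (v w : Fin q → ℂ) :
    (star v ⬝ᵥ w).re = vre v ⬝ᵥ vre w + vim v ⬝ᵥ vim w := by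
  simp only [dotProduct, Complex.re_sum, Pi.star_apply, ← Finset.sum_add_distrib]
  congr 1
  funext i
  simp [vre, vim, Complex.mul_re]

lemma re_form {q : ℕ} (S : Matrix (Fin q) (Fin q) ℝ) (v : Fin q → ℂ) :
    (star v ⬝ᵥ mC S *ᵥ v).re = vre v ⬝ᵥ S *ᵥ vre v + vim v ⬝ᵥ S *ᵥ vim v := by
  rw [re_dotP, mC_mulVec_re, mC_mulVec_im]

lemma re_form_nonneg {q : ℕ} {S : Matrix (Fin q) (Fin q) ℝ} (hS : S.PosSemidef)
    (v : Fin q → ℂ) : 0 ≤ (star v ⬝ᵥ mC S *ᵥ v).re := by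
  rw [re_form]
  exact add_nonneg (psd_dot hS _) (psd_dot hS _)

lemma re_form_pos {q : ℕ} {S : Matrix (Fin q) (Fin q) ℝ} (hS : S.PosDef)
    {v : Fin q → ℂ} (hv : v ≠ 0) : 0 < (star v ⬝ᵥ mC S *ᵥ v).re := by
  rw [re_form]
  have : vre v ≠ 0 ∨ vim v ≠ 0 := by
    by_contra hc
    push_neg at hc
    apply hv
    funext i
    have h1 := congrFun hc.1 i
    have h2 := congrFun hc.2 i
    simp only [vre, vim, Pi.zero_apply] at h1 h2
    exact Complex.ext (by simpa using h1) (by simpa using h2)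
  rcases this with h | h
  · have h1 := hS.dotProduct_mulVec_pos h
    have h2 := hS.posSemidef.dotProduct_mulVec_nonneg (vim v)
    simp only [star_trivial] at h1 h2
    linarith
  · have h1 := hS.posSemidef.dotProduct_mulVec_nonneg (vre v)
    have h2 := hS.dotProduct_mulVec_pos h
    simp only [star_trivial] at h1 h2
    linarith

lemma re_form_eq_zero {q : ℕ} {S : Matrix (Fin q) (Fin q) ℝ} (hS : S.PosSemidef)
    {v : Fin q → ℂ} (h : (star v ⬝ᵥ mC S *ᵥ v).re = 0) :
    S *ᵥ vre v = 0 ∧ S *ᵥ vim v = 0 := by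
  rw [re_form] at h
  have h1 : vre v ⬝ᵥ S *ᵥ vre v = 0 := by
    have := psd_dot hS (vre v); have := psd_dot hS (vim v); linarith
  have h2 : vim v ⬝ᵥ S *ᵥ vim v = 0 := by
    have := psd_dot hS (vre v); have := psd_dot hS (vim v); linarith
  constructor
  · exact (hS.dotProduct_mulVec_zero_iff (vre v)).mp (by simpa using h1)
  · exact (hS.dotProduct_mulVec_zero_iff (vim v)).mp (by simpa using h2)


lemma mC_transpose {p q : ℕ} (M : Matrix (Fin p) (Fin q) ℝ) : mC Mᵀ = (mC M)ᴴ := by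
  funext i j
  simp [mC, Matrix.conjTranspose_apply, Matrix.map_apply]

lemma mC_sub {p q : ℕ} (M N : Matrix (Fin p) (Fin q) ℝ) : mC (M - N) = mC M - mC N := by
  funext i j
  simp [mC, Matrix.map_apply]

lemma mC_add {p q : ℕ} (M N : Matrix (Fin p) (Fin q) ℝ) : mC (M + N) = mC M + mC N := by
  funext i j
  simp [mC, Matrix.map_apply]

lemma schur_of_lyap {p : ℕ} {M P S : Matrix (Fin p) (Fin p) ℝ} (hP : P.PosDef)
    (hS : S.PosSemidef) (h : Mᵀ * P * M = P - S)
    (hker : ∀ (v : Fin p → ℂ) (μ : ℂ), mC M *ᵥ v = μ • v →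
      (star v ⬝ᵥ mC S *ᵥ v).re = 0 → v = 0) :
    SchurStable M := by
  intro μ hμ
  by_contra hc
  push_neg at hc
  change μ ∈ spectrum ℂ (mC M) at hμ
  rw [spectrum.mem_iff] at hμ
  rw [Matrix.isUnit_iff_isUnit_det, isUnit_iff_ne_zero, not_not] at hμ
  obtain ⟨v, hv0, hveq⟩ := (Matrix.exists_mulVec_eq_zero_iff).mpr hμ
  have heig : mC M *ᵥ v = μ • v := by
    rw [Algebra.algebraMap_eq_smul_one, Matrix.sub_mulVec, Matrix.smul_mulVec,
      Matrix.one_mulVec, sub_eq_zero] at hveq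
    exact hveq.symm
  set t := star v ⬝ᵥ mC P *ᵥ v with ht
  set s := star v ⬝ᵥ mC S *ᵥ v with hs
  have c1 : star v ⬝ᵥ mC (Mᵀ * P * M) *ᵥ v
      = star (mC M *ᵥ v) ⬝ᵥ mC P *ᵥ (mC M *ᵥ v) := by
    rw [mC_mul, mC_mul, mC_transpose, ← Matrix.mulVec_mulVec, ← Matrix.mulVec_mulVec,
      Matrix.dotProduct_mulVec, ← Matrix.star_mulVec]
  have c2 : star (mC M *ᵥ v) ⬝ᵥ mC P *ᵥ (mC M *ᵥ v)
      = (Complex.normSq μ : ℂ) * t := by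
    rw [heig]
    rw [star_smul, Matrix.mulVec_smul, smul_dotProduct, dotProduct_smul]
    rw [ht, smul_smul, smul_eq_mul]
    rw [Complex.normSq_eq_conj_mul_self]
    simp [mul_comm]
  have c3 : star v ⬝ᵥ mC (Mᵀ * P * M) *ᵥ v = t - s := by
    rw [h, mC_sub, Matrix.sub_mulVec, dotProduct_sub]
  have key : (Complex.normSq μ : ℝ) * t.re = t.re - s.re := by
    have := c3 ▸ (c1.trans c2)
    have hre := congrArg Complex.re this
    simpa [Complex.mul_re] using hre.symm
  have ht_pos : 0 < t.re := re_form_pos hP hv0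
  have hs_nonneg : 0 ≤ s.re := re_form_nonneg hS v
  have hnsq : 1 ≤ Complex.normSq μ := by
    have : 1 ≤ ‖μ‖ := hc
    have h2 : Complex.normSq μ = ‖μ‖ ^ 2 := by
      simp [← Complex.sq_norm]
    nlinarith
  have hs0 : s.re = 0 := by nlinarith
  exact hv0 (hker v μ heig hs0)


lemma realCT {p q : ℕ} (M : Matrix (Fin p) (Fin q) ℝ) : Mᴴ = Mᵀ := by
  funext i j; simp [Matrix.conjTranspose_apply]

lemma smul_psd {p : ℕ} {M : Matrix (Fin p) (Fin p) ℝ} {c : ℝ} (hc : 0 ≤ c)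
    (hM : M.PosSemidef) : (c • M).PosSemidef := by
  apply Matrix.PosSemidef.of_dotProduct_mulVec_nonneg
  · show (c • M)ᴴ = c • M
    rw [realCT, Matrix.transpose_smul]
    have hMT : Mᵀ = M := by rw [← realCT]; exact hM.isHermitian
    rw [hMT]
  · intro x
    rw [Matrix.smul_mulVec, dotProduct_smul]
    exact smul_nonneg hc (by simpa using hM.dotProduct_mulVec_nonneg x)


lemma mC_smul {p q : ℕ} (c : ℝ) (M : Matrix (Fin p) (Fin q) ℝ) :
    mC (c • M) = (c : ℂ) • mC M := by
  funext i j
  simp [mC, Matrix.map_apply]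

lemma eq_zero_of_parts {q : ℕ} {v : Fin q → ℂ} (h1 : vre v = 0) (h2 : vim v = 0) : v = 0 := by
  funext i
  have e1 := congrFun h1 i
  have e2 := congrFun h2 i
  simp only [vre, vim, Pi.zero_apply] at e1 e2
  exact Complex.ext (by simpa using e1) (by simpa using e2)

lemma vre_zero {q : ℕ} : vre (0 : Fin q → ℂ) = 0 := by funext i; simp [vre]
lemma vim_zero {q : ℕ} : vim (0 : Fin q → ℂ) = 0 := by funext i; simp [vim]

end SchurAux

open SchurAux

theorem stmt_13 {n m : ℕ}
    (A : Matrix (Fin n) (Fin n) ℝ) (B : Matrix (Fin n) (Fin m) ℝ)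
    (Q : Matrix (Fin n) (Fin n) ℝ) (R : Matrix (Fin m) (Fin m) ℝ)
    (hQ : Q.PosSemidef) (hR : R.PosDef)
    (hObs : ∀ x : Fin n → ℝ, (∀ k : ℕ, Q.mulVec ((A ^ k).mulVec x) = 0) → x = 0)
    (γ : ℝ) (hγ : 0 < γ)
    (K : Matrix (Fin m) (Fin n) ℝ)
    (hK : SchurStable (γ • (A - B * K)))
    (Ptil : Matrix (Fin n) (Fin n) ℝ) (hPtil : Ptil.PosDef)
    (hPtilEq : γ ^ 2 • ((A - B * K)ᵀ * Ptil * (A - B * K)) - Ptil + Q + Kᵀ * R * K = 0)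
    (Kplus : Matrix (Fin m) (Fin n) ℝ)
    (hKplus : Kplus = (Bᵀ * Ptil * B + (1 / γ ^ 2) • R)⁻¹ * (Bᵀ * Ptil * A))
    (Pbar : Matrix (Fin n) (Fin n) ℝ) (hPbarSymm : Pbar.IsSymm)
    (hPbarEq : γ ^ 2 • ((A - B * Kplus)ᵀ * Pbar * (A - B * Kplus)) - Pbar + Q
        + Kplusᵀ * R * Kplus = 0) :
    Pbar.PosDef ∧ (Ptil - Pbar).PosSemidef := by
  have hγ2 : (0:ℝ) < γ ^ 2 := by positivity
  have hγne : γ ≠ 0 := ne_of_gt hγ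
  -- real conjTranspose = transpose
  have hPtilT : Ptilᵀ = Ptil := by rw [← realCT]; exact hPtil.isHermitian
  have hRT : Rᵀ = R := by rw [← realCT]; exact hR.isHermitian
  -- the positive definite matrix G
  set G : Matrix (Fin m) (Fin m) ℝ := γ ^ 2 • (Bᵀ * Ptil * B) + R with hGdef
  have hBPB : (Bᵀ * Ptil * B).PosSemidef := by
    have := hPtil.posSemidef.conjTranspose_mul_mul_same B
    rwa [realCT] at this
  have hG : G.PosDef := Matrix.PosDef.posSemidef_add (smul_psd hγ2.le hBPB) hR
  have hGT : Gᵀ = G := by rw [← realCT]; exact hG.isHermitian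
  -- H and the formula for G * Kplus
  set H : Matrix (Fin m) (Fin m) ℝ := Bᵀ * Ptil * B + (1 / γ ^ 2) • R with hHdef
  have hH : H.PosDef := by
    have hsmulR : ((1 / γ ^ 2) • R).PosDef := by
      apply Matrix.PosDef.of_dotProduct_mulVec_pos
      · show ((1 / γ ^ 2) • R)ᴴ = (1 / γ ^ 2) • R
        rw [realCT, Matrix.transpose_smul, hRT]
      · intro x hx
        rw [Matrix.smul_mulVec, dotProduct_smul]
        have := hR.dotProduct_mulVec_pos hx
        have hc : (0:ℝ) < 1 / γ ^ 2 := by positivity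
        simpa using smul_pos hc this
    exact Matrix.PosDef.posSemidef_add hBPB hsmulR
  have hGH : G = γ ^ 2 • H := by
    rw [hHdef, hGdef, smul_add, smul_smul]
    rw [mul_one_div_cancel (ne_of_gt hγ2), one_smul]
  have hGK : G * Kplus = γ ^ 2 • (Bᵀ * Ptil * A) := by
    rw [hKplus, hGH, Matrix.smul_mul, Matrix.mul_nonsing_inv_cancel_left _ _
      (Matrix.isUnit_iff_isUnit_det H |>.mp hH.isUnit)]
  have hKG : Kplusᵀ * G = γ ^ 2 • (Aᵀ * Ptil * B) := by
    have := congrArg Matrix.transpose hGK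
    rw [Matrix.transpose_mul, hGT, Matrix.transpose_smul, Matrix.transpose_mul,
      Matrix.transpose_mul, Matrix.transpose_transpose, hPtilT] at this
    rw [this, Matrix.mul_assoc]
  -- completion of squares
  have claim : ∀ K' : Matrix (Fin m) (Fin n) ℝ,
      γ ^ 2 • ((A - B * K')ᵀ * Ptil * (A - B * K')) + K'ᵀ * R * K'
        = γ ^ 2 • (Aᵀ * Ptil * A) - K'ᵀ * (G * Kplus) - (Kplusᵀ * G) * K' + K'ᵀ * G * K' := by
    intro K'
    rw [hGK, hKG, hGdef]
    simp only [Matrix.transpose_sub, Matrix.transpose_mul, Matrix.sub_mul, Matrix.mul_sub,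
      Matrix.add_mul, Matrix.mul_add, Matrix.smul_mul, Matrix.mul_smul, smul_sub, smul_add,
      Matrix.mul_assoc]
    abel
  set E : Matrix (Fin n) (Fin n) ℝ := (K - Kplus)ᵀ * G * (K - Kplus) with hEdef
  have hE : E.PosSemidef := by
    have := hG.posSemidef.conjTranspose_mul_mul_same (K - Kplus)
    rwa [realCT] at this
  have identity : γ ^ 2 • ((A - B * Kplus)ᵀ * Ptil * (A - B * Kplus)) + Kplusᵀ * R * Kplus + E
      = γ ^ 2 • ((A - B * K)ᵀ * Ptil * (A - B * K)) + Kᵀ * R * K := by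
    rw [hEdef, claim Kplus, claim K]
    simp only [Matrix.transpose_sub, Matrix.transpose_mul, Matrix.sub_mul, Matrix.mul_sub,
      Matrix.mul_assoc]
    abel
  -- quadratic scaling
  have smul_quad : ∀ (P X : Matrix (Fin n) (Fin n) ℝ),
      (γ • X)ᵀ * P * (γ • X) = γ ^ 2 • (Xᵀ * P * X) := by
    intro P X
    rw [Matrix.transpose_smul, Matrix.smul_mul, Matrix.smul_mul, Matrix.mul_smul, smul_smul, sq]
  set Mp : Matrix (Fin n) (Fin n) ℝ := γ • (A - B * Kplus) with hMpdef
  set Sbar : Matrix (Fin n) (Fin n) ℝ := Q + Kplusᵀ * R * Kplus with hSbardef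
  set S : Matrix (Fin n) (Fin n) ℝ := Sbar + E with hSdef
  have hSbarPsd : Sbar.PosSemidef := by
    refine hQ.add ?_
    have := hR.posSemidef.conjTranspose_mul_mul_same Kplus
    rwa [realCT] at this
  have hSPsd : S.PosSemidef := hSbarPsd.add hE
  have eqSbar : Mpᵀ * Pbar * Mp - Pbar + Sbar = 0 := by
    rw [hMpdef, smul_quad, hSbardef]
    calc γ ^ 2 • ((A - B * Kplus)ᵀ * Pbar * (A - B * Kplus)) - Pbar + (Q + Kplusᵀ * R * Kplus)
        = γ ^ 2 • ((A - B * Kplus)ᵀ * Pbar * (A - B * Kplus)) - Pbar + Q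
          + Kplusᵀ * R * Kplus := by abel
      _ = 0 := hPbarEq
  have eqS : Mpᵀ * Ptil * Mp - Ptil + S = 0 := by
    rw [hMpdef, smul_quad, hSdef, hSbardef]
    have h1 : γ ^ 2 • ((A - B * K)ᵀ * Ptil * (A - B * K)) - Ptil + (Q + Kᵀ * R * K) = 0 := by
      calc γ ^ 2 • ((A - B * K)ᵀ * Ptil * (A - B * K)) - Ptil + (Q + Kᵀ * R * K)
          = γ ^ 2 • ((A - B * K)ᵀ * Ptil * (A - B * K)) - Ptil + Q + Kᵀ * R * K := by abel
        _ = 0 := hPtilEq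
    have h2 := identity
    calc γ ^ 2 • ((A - B * Kplus)ᵀ * Ptil * (A - B * Kplus)) - Ptil + (Q + Kplusᵀ * R * Kplus + E)
        = (γ ^ 2 • ((A - B * Kplus)ᵀ * Ptil * (A - B * Kplus)) + Kplusᵀ * R * Kplus + E)
          - Ptil + Q := by abel
      _ = (γ ^ 2 • ((A - B * K)ᵀ * Ptil * (A - B * K)) + Kᵀ * R * K) - Ptil + Q := by rw [h2]
      _ = γ ^ 2 • ((A - B * K)ᵀ * Ptil * (A - B * K)) - Ptil + (Q + Kᵀ * R * K) := by abel
      _ = 0 := h1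
  have hKRK : (Kplusᵀ * R * Kplus).PosSemidef := by
    have := hR.posSemidef.conjTranspose_mul_mul_same Kplus
    rwa [realCT] at this
  have e1 : Mpᵀ * Ptil * Mp = Ptil - S := by
    have h := eqS; rwa [sub_add, sub_eq_zero] at h
  -- Schur stability of Mp
  have hMpSchur : SchurStable Mp := by
    refine schur_of_lyap hPtil hSPsd e1 ?_
    intro v μ heig hre0
    -- split the real part of the quadratic form into three nonnegative pieces
    have hsplit : (star v ⬝ᵥ mC S *ᵥ v).re
        = (star v ⬝ᵥ mC Q *ᵥ v).re + (star v ⬝ᵥ mC (Kplusᵀ * R * Kplus) *ᵥ v).re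
          + (star v ⬝ᵥ mC E *ᵥ v).re := by
      rw [hSdef, hSbardef, mC_add, mC_add, Matrix.add_mulVec, Matrix.add_mulVec,
        dotProduct_add, dotProduct_add, Complex.add_re, Complex.add_re]
    have n1 := re_form_nonneg hQ v
    have n2 := re_form_nonneg hKRK v
    have n3 := re_form_nonneg hE v
    have hQ0 : (star v ⬝ᵥ mC Q *ᵥ v).re = 0 := by rw [hsplit] at hre0; linarith
    have hK0 : (star v ⬝ᵥ mC (Kplusᵀ * R * Kplus) *ᵥ v).re = 0 := by
      rw [hsplit] at hre0; linarith
    -- Q annihilates v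
    have hQv : mC Q *ᵥ v = 0 := by
      obtain ⟨ha, hb⟩ := re_form_eq_zero hQ hQ0
      exact (mC_mulVec_eq_zero_iff Q v).mpr ⟨ha, hb⟩
    -- Kplus annihilates v
    have hKv : mC Kplus *ᵥ v = 0 := by
      rw [re_form, dot_mul3, dot_mul3] at hK0
      have m1 := psd_dot hR.posSemidef (Kplus *ᵥ vre v)
      have m2 := psd_dot hR.posSemidef (Kplus *ᵥ vim v)
      have hz1 : Kplus *ᵥ vre v = 0 := by
        by_contra hne
        have := hR.dotProduct_mulVec_pos hne
        simp only [star_trivial] at this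
        linarith
      have hz2 : Kplus *ᵥ vim v = 0 := by
        by_contra hne
        have := hR.dotProduct_mulVec_pos hne
        simp only [star_trivial] at this
        linarith
      exact (mC_mulVec_eq_zero_iff Kplus v).mpr ⟨hz1, hz2⟩
    -- eigenvalue equation for A
    have hAv : mC A *ᵥ v = ((γ : ℂ)⁻¹ * μ) • v := by
      have h1 : mC Mp *ᵥ v = (γ : ℂ) • (mC A *ᵥ v) := by
        rw [hMpdef, mC_smul, mC_sub, mC_mul, Matrix.smul_mulVec, Matrix.sub_mulVec,
          ← Matrix.mulVec_mulVec, hKv, Matrix.mulVec_zero, sub_zero]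
      have h2 : (γ : ℂ) • (mC A *ᵥ v) = μ • v := by rw [← h1, heig]
      have hγC : (γ : ℂ) ≠ 0 := by exact_mod_cast hγne
      have h4 : (γ : ℂ)⁻¹ • ((γ : ℂ) • (mC A *ᵥ v)) = (γ : ℂ)⁻¹ • (μ • v) :=
        congrArg ((γ : ℂ)⁻¹ • ·) h2
      rw [inv_smul_smul₀ hγC, smul_smul] at h4
      exact h4
    have hk : ∀ k : ℕ, mC (A ^ k) *ᵥ v = (((γ : ℂ)⁻¹ * μ) ^ k) • v := by
      intro k
      induction k with
      | zero => simp [mC]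
      | succ k ih =>
        rw [pow_succ', mC_mul, ← Matrix.mulVec_mulVec, ih, Matrix.mulVec_smul, hAv,
          smul_smul, ← pow_succ]
    have hQAk : ∀ k : ℕ, Q *ᵥ (A ^ k *ᵥ vre v) = 0 ∧ Q *ᵥ (A ^ k *ᵥ vim v) = 0 := by
      intro k
      have hz : mC Q *ᵥ (mC (A ^ k) *ᵥ v) = 0 := by
        rw [hk k, Matrix.mulVec_smul, hQv, smul_zero]
      constructor
      · have := congrArg vre hz
        rw [mC_mulVec_re, mC_mulVec_re, vre_zero] at this
        exact this
      · have := congrArg vim hz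
        rw [mC_mulVec_im, mC_mulVec_im, vim_zero] at this
        exact this
    have hre : vre v = 0 := hObs _ (fun k => (hQAk k).1)
    have him : vim v = 0 := hObs _ (fun k => (hQAk k).2)
    exact eq_zero_of_parts hre him
  -- Pbar is PSD
  have hPbarPsd : ∀ x, 0 ≤ x ⬝ᵥ Pbar *ᵥ x := lyap_nonneg hMpSchur hSbarPsd eqSbar
  -- Pbar is PosDef
  have hPbarPD : Pbar.PosDef := by
    have hherm : Pbar.IsHermitian := by
      show Pbarᴴ = Pbar
      rw [realCT]; exact hPbarSymm
    refine Matrix.PosDef.of_dotProduct_mulVec_pos hherm (fun x hx => ?_)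
    simp only [star_trivial]
    rcases lt_or_eq_of_le (hPbarPsd x) with hlt | heq
    · exact hlt
    · exfalso
      have hx0 : x ⬝ᵥ Pbar *ᵥ x = 0 := heq.symm
      have hterms := lyap_zero_terms hMpSchur hSbarPsd eqSbar hx0
      -- for every k, Q and Kplus annihilate Mp ^ k *ᵥ x
      have hQK : ∀ k : ℕ, Q *ᵥ (Mp ^ k *ᵥ x) = 0 ∧ Kplus *ᵥ (Mp ^ k *ᵥ x) = 0 := by
        intro k
        set y := Mp ^ k *ᵥ x with hy
        have hsp : y ⬝ᵥ Sbar *ᵥ y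
            = y ⬝ᵥ Q *ᵥ y + (Kplus *ᵥ y) ⬝ᵥ R *ᵥ (Kplus *ᵥ y) := by
          rw [hSbardef, Matrix.add_mulVec, dotProduct_add, dot_mul3]
        have hz := hterms k
        rw [← hy] at hz
        rw [hsp] at hz
        have m1 := psd_dot hQ y
        have m2 := psd_dot hR.posSemidef (Kplus *ᵥ y)
        have hq0 : y ⬝ᵥ Q *ᵥ y = 0 := by linarith
        have hk0 : Kplus *ᵥ y = 0 := by
          by_contra hne
          have := hR.dotProduct_mulVec_pos hne
          simp only [star_trivial] at this
          linarith
        refine ⟨?_, hk0⟩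
        exact (hQ.dotProduct_mulVec_zero_iff y).mp (by simpa using hq0)
      have hyk : ∀ k : ℕ, Mp ^ k *ᵥ x = γ ^ k • (A ^ k *ᵥ x) := by
        intro k
        induction k with
        | zero => simp
        | succ k ih =>
          have hstep : Mp ^ (k + 1) *ᵥ x = Mp *ᵥ (Mp ^ k *ᵥ x) := by
            rw [Matrix.mulVec_mulVec, ← pow_succ']
          rw [hstep, hMpdef, Matrix.smul_mulVec, Matrix.sub_mulVec,
            ← Matrix.mulVec_mulVec, (hQK k).2, Matrix.mulVec_zero, sub_zero, ih,
            Matrix.mulVec_smul, Matrix.mulVec_mulVec, ← pow_succ', smul_smul, ← pow_succ']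
      have hobs : ∀ k : ℕ, Q *ᵥ (A ^ k *ᵥ x) = 0 := by
        intro k
        have := (hQK k).1
        rw [hyk k, Matrix.mulVec_smul] at this
        exact (smul_eq_zero.mp this).resolve_left (pow_ne_zero k hγne)
      exact hx (hObs x hobs)
  refine ⟨hPbarPD, ?_⟩
  -- difference equation
  have eqD : Mpᵀ * (Ptil - Pbar) * Mp - (Ptil - Pbar) + E = 0 := by
    have e1 : Mpᵀ * Ptil * Mp = Ptil - S := by
      have h := eqS; rwa [sub_add, sub_eq_zero] at h
    have e2 : Mpᵀ * Pbar * Mp = Pbar - Sbar := by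
      have h := eqSbar; rwa [sub_add, sub_eq_zero] at h
    rw [Matrix.mul_sub, Matrix.sub_mul, e1, e2, hSdef]
    abel
  refine Matrix.PosSemidef.of_dotProduct_mulVec_nonneg ?_ (fun x => ?_)
  · show (Ptil - Pbar)ᴴ = Ptil - Pbar
    rw [realCT, Matrix.transpose_sub, hPtilT, hPbarSymm]
  · have := lyap_nonneg hMpSchur hE eqD x
    simpa using this
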